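/- arXiv:1607.00748 — 3 statements merged into one kernel-verified Lean document; each statement's English description precedes it below -/
import Mathlib

section
/- Under the stability condition max_k E[J_k(1)] < E[I(1)] with I(1) > 0 a.s., almost surely there exists a finite N such that A(-N) + W*_k(-N) + J_k(N) < 0 for all k = 1, ..., K; i.e., the backward coalescence time detecting all past service completions before time 0 is almost surely finite. -/
open MeasureTheory ProbabilityTheory Filter

/-- Under stability max_k E[J_k(1)] < E[I(1)] with I(1) > 0 a.s., almost surely there is a
finite N with A(-N) + W*_k(-N) + J_k(N) < 0 for all stations k: the backward coalescence
time is a.s. finite. Here W*_k(-n) = sup_{m ≥ n} ∑_{i=n+1}^m (J_k(i) - I(i)). -/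
theorem backward_coalescence_time_finite
    {Ω : Type*} [MeasurableSpace Ω] (P : Measure Ω) [IsProbabilityMeasure P]
    (K : ℕ) (hK : 1 ≤ K)
    (J : ℕ → Ω → Fin K → ℝ) (I : ℕ → Ω → ℝ)
    (hmeas : ∀ n, Measurable (fun ω => (J n ω, I n ω)))
    (hindep : iIndepFun (fun n ω => (J n ω, I n ω)) P)
    (hident : ∀ n, 1 ≤ n →
      IdentDistrib (fun ω => (J n ω, I n ω)) (fun ω => (J 1 ω, I 1 ω)) P P)
    (hJpos : ∀ n ω k, 0 ≤ J n ω k) (hIpos : ∀ n, ∀ᵐ ω ∂P, 0 < I n ω)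
    (hJint : ∀ k, Integrable (fun ω => J 1 ω k) P) (hIint : Integrable (I 1) P)
    (hmean : ∀ k, ∫ ω, J 1 ω k ∂P < ∫ ω, I 1 ω ∂P)
    (A : ℕ → Ω → ℝ) (W : Fin K → ℕ → Ω → ℝ)
    (hA : ∀ n ω, A n ω = -∑ m ∈ Finset.Icc 1 n, I m ω)
    (hW : ∀ k n ω, W k n ω =
      ⨆ m : {m : ℕ // n ≤ m}, ∑ i ∈ Finset.Icc (n + 1) (m : ℕ), (J i ω k - I i ω)) :
    ∀ᵐ ω ∂P, ∃ N, 1 ≤ N ∧ ∀ k, A N ω + W k N ω + J N ω k < 0 := by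
  have hg : ∀ k : Fin K, Measurable (fun p : (Fin K → ℝ) × ℝ => p.1 k - p.2) :=
    fun k => ((measurable_pi_apply k).comp measurable_fst).sub measurable_snd
  -- Strong law: partial sums tend eventually below -1 a.s.
  have key : ∀ k : Fin K, ∀ᵐ ω ∂P, ∀ᶠ n in atTop,
      (∑ i ∈ Finset.Icc 1 n, (J i ω k - I i ω)) ≤ -1 := by
    intro k
    set X : ℕ → Ω → ℝ := fun n ω => J (n + 1) ω k - I (n + 1) ω with hX
    have hX0 : X 0 = fun ω => J 1 ω k - I 1 ω := rfl
    have hint : Integrable (X 0) P := by rw [hX0]; exact (hJint k).sub hIint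
    have hpair : Pairwise (Function.onFun (IndepFun · · P) X) := by
      intro i j hij
      exact (hindep.indepFun (show i + 1 ≠ j + 1 by omega)).comp (hg k) (hg k)
    have hid : ∀ i, IdentDistrib (X i) (X 0) P P := fun i =>
      (hident (i + 1) (by omega)).comp (hg k)
    have slln := strong_law_ae_real X hint hpair hid
    have hmu : (P[X 0]) < 0 := by
      rw [hX0, integral_sub (hJint k) hIint]
      linarith [hmean k]
    set μ := P[X 0]
    filter_upwards [slln] with ω hω
    have h1 : ∀ᶠ n : ℕ in atTop, (∑ i ∈ Finset.range n, X i ω) / n < μ / 2 :=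
      hω.eventually_lt_const (by linarith)
    have h2 : Tendsto (fun n : ℕ => (μ / 2) * n) atTop atBot := by
      apply Tendsto.const_mul_atTop_of_neg (by linarith)
      exact tendsto_natCast_atTop_atTop
    have h3 : ∀ᶠ n : ℕ in atTop, (μ / 2) * n ≤ -1 := h2.eventually_le_atBot (-1)
    filter_upwards [h1, h3, eventually_ge_atTop 1] with n hn1 hn3 hn4
    have hnpos : (0 : ℝ) < n := by exact_mod_cast hn4
    have hsum : (∑ i ∈ Finset.range n, X i ω) = ∑ i ∈ Finset.Icc 1 n, (J i ω k - I i ω) := by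
      rw [← Finset.Ico_add_one_right_eq_Icc, Finset.sum_Ico_eq_sum_range]
      exact Finset.sum_congr rfl (fun i _ => by rw [hX]; ring_nf)
    rw [div_lt_iff₀ hnpos] at hn1
    rw [← hsum]
    linarith
  have main : ∀ᵐ ω ∂P, ∀ k : Fin K, ∀ᶠ n in atTop,
      (∑ i ∈ Finset.Icc 1 n, (J i ω k - I i ω)) ≤ -1 := ae_all_iff.2 key
  filter_upwards [main] with ω hω
  have hall : ∀ᶠ n : ℕ in atTop, ∀ k : Fin K,
      (∑ i ∈ Finset.Icc 1 n, (J i ω k - I i ω)) ≤ -1 := eventually_all.2 hω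
  obtain ⟨N0, hN0⟩ := eventually_atTop.1 hall
  refine ⟨max N0 1, le_max_right _ _, fun k => ?_⟩
  set N := max N0 1 with hNdef
  have hN1 : 1 ≤ N := le_max_right _ _
  have hSm : ∀ m, N ≤ m → (∑ i ∈ Finset.Icc 1 m, (J i ω k - I i ω)) ≤ -1 :=
    fun m hm => hN0 m (le_trans (le_max_left _ _) hm) k
  have hWb : W k N ω ≤ -1 - ∑ i ∈ Finset.Icc 1 N, (J i ω k - I i ω) := by
    rw [hW]
    haveI : Nonempty {m : ℕ // N ≤ m} := ⟨⟨N, le_rfl⟩⟩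
    apply ciSup_le
    rintro ⟨m, hm⟩
    have split : (∑ i ∈ Finset.Icc 1 N, (J i ω k - I i ω))
        + ∑ i ∈ Finset.Icc (N + 1) m, (J i ω k - I i ω)
        = ∑ i ∈ Finset.Icc 1 m, (J i ω k - I i ω) := by
      have e1 : Finset.Icc 1 N = Finset.Ioc 0 N := Finset.Icc_add_one_left_eq_Ioc 0 N
      have e2 : Finset.Icc 1 m = Finset.Ioc 0 m := Finset.Icc_add_one_left_eq_Ioc 0 m
      have e3 : Finset.Icc (N + 1) m = Finset.Ioc N m := Finset.Icc_add_one_left_eq_Ioc N m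
      rw [e1, e2, e3]
      exact Finset.sum_Ioc_consecutive _ (Nat.zero_le N) hm
    have := hSm m hm
    linarith
  have hsub : (∑ i ∈ Finset.Icc 1 N, (J i ω k - I i ω))
      = (∑ i ∈ Finset.Icc 1 N, J i ω k) - ∑ i ∈ Finset.Icc 1 N, I i ω :=
    Finset.sum_sub_distrib _ _
  have hsingle : J N ω k ≤ ∑ i ∈ Finset.Icc 1 N, J i ω k :=
    Finset.single_le_sum (fun i _ => hJpos i ω k) (Finset.mem_Icc.2 ⟨hN1, le_rfl⟩)
  rw [hA]
  linarith
end

section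
/- Let V*_k = -∑_{n=1}^{-τ_k} J_k(n)/μ_k² where τ_k = max{n ≤ 0 : W*_k(n) = 0} is the last time the stationary waiting time at station k was zero. Under stability E[J_k(1)/μ_k] < E[I(1)] and the exponential moment condition E[exp(θ J_k(1))] < ∞ for some θ > 0, V*_k is integrable: E[|V*_k|] < ∞. -/
set_option maxHeartbeats 1000000

open MeasureTheory ProbabilityTheory Real

section helpers

lemma exp_sub_one_le' (s : ℝ) (hs : 0 ≤ s) : exp s - 1 ≤ s * exp s := by
  have h1 := Real.add_one_le_exp (-s)
  have h2 : exp (-s) * exp s = 1 := by rw [← Real.exp_add]; simp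
  nlinarith [Real.exp_pos s, Real.exp_pos (-s)]

lemma exp_quad (z : ℝ) : exp z ≤ 1 + z + z ^ 2 * exp |z| := by
  rcases le_or_gt 0 z with hz | hz
  · rw [abs_of_nonneg hz]
    have h1 := exp_sub_one_le' z hz
    have h2 := exp_sub_one_le' (z/2) (by linarith)
    have h3 : exp (z/2) ≤ exp z := Real.exp_le_exp.2 (by linarith)
    have h4 : exp (z/2) * exp (z/2) = exp z := by rw [← Real.exp_add]; ring_nf
    nlinarith [Real.exp_pos (z/2), Real.exp_pos z, sq_nonneg z]
  · rw [abs_of_neg hz]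
    have h1 := Real.add_one_le_exp (-z)
    have h2 : exp (-z) * exp z = 1 := by rw [← Real.exp_add]; simp
    have h3 : (1 : ℝ) ≤ exp (-z) := by rw [Real.one_le_exp_iff]; linarith
    have key : exp z ≤ 1 + z + z ^ 2 := by nlinarith [Real.exp_pos z, Real.exp_pos (-z)]
    nlinarith [sq_nonneg z]

lemma sq_le_four_mul_exp (s : ℝ) (hs : 0 ≤ s) : s ^ 2 ≤ 4 * exp s := by
  have h1 := Real.add_one_le_exp (s/2)
  have h2 : exp (s/2) * exp (s/2) = exp s := by rw [← Real.exp_add]; ring_nf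
  nlinarith [Real.exp_pos (s/2)]

lemma exists_theta_mgf_lt_one {Ω : Type*} [MeasurableSpace Ω] (P : Measure Ω)
    [IsProbabilityMeasure P] (Y : Ω → ℝ) (hYint : Integrable Y P)
    (hneg : ∫ ω, Y ω ∂P < 0) (B : Ω → ℝ) (hB : Integrable B P) (θf : ℝ) (hθf : 0 < θf)
    (hbound : ∀ᵐ ω ∂P, Y ω ^ 2 * exp (θf * |Y ω|) ≤ B ω)
    (hint : ∀ θ : ℝ, 0 < θ → θ ≤ θf → Integrable (fun ω => exp (θ * Y ω)) P) :
    ∃ θ : ℝ, 0 < θ ∧ θ ≤ θf ∧ ∫ ω, exp (θ * Y ω) ∂P < 1 := by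
  set m := ∫ ω, Y ω ∂P with hm
  set M := ∫ ω, B ω ∂P with hM
  have hBnn : ∀ᵐ ω ∂P, 0 ≤ B ω := by
    filter_upwards [hbound] with ω h
    exact le_trans (mul_nonneg (sq_nonneg _) (exp_pos _).le) h
  have hMnn : 0 ≤ M := integral_nonneg_of_ae hBnn
  have hmneg : 0 < -m := by linarith
  set θ := min θf (-m / (2 * (M + 1))) with hθdef
  have hθpos : 0 < θ := lt_min hθf (by positivity)
  have hθle : θ ≤ θf := min_le_left _ _
  refine ⟨θ, hθpos, hθle, ?_⟩
  have hptw : ∀ᵐ ω ∂P, exp (θ * Y ω) ≤ 1 + θ * Y ω + θ ^ 2 * B ω := by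
    filter_upwards [hbound] with ω hbω
    calc exp (θ * Y ω) ≤ 1 + θ * Y ω + (θ * Y ω) ^ 2 * exp |θ * Y ω| := exp_quad _
      _ ≤ 1 + θ * Y ω + θ ^ 2 * B ω := by
          have h1 : |θ * Y ω| = θ * |Y ω| := by rw [abs_mul, abs_of_pos hθpos]
          have h2 : exp (θ * |Y ω|) ≤ exp (θf * |Y ω|) :=
            Real.exp_le_exp.2 (mul_le_mul_of_nonneg_right hθle (abs_nonneg _))
          have h3 : (θ * Y ω) ^ 2 * exp |θ * Y ω| ≤ θ ^ 2 * (Y ω ^ 2 * exp (θf * |Y ω|)) := by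
            rw [h1, mul_pow, mul_assoc]
            exact mul_le_mul_of_nonneg_left
              (mul_le_mul_of_nonneg_left h2 (sq_nonneg _)) (sq_nonneg θ)
          have h4 := mul_le_mul_of_nonneg_left hbω (sq_nonneg θ)
          linarith
  have hRint : Integrable (fun ω => 1 + θ * Y ω + θ ^ 2 * B ω) P :=
    ((integrable_const 1).add (hYint.const_mul θ)).add (hB.const_mul (θ ^ 2))
  have hInt := integral_mono_ae (hint θ hθpos hθle) hRint hptw
  have hcalc : ∫ ω, (1 + θ * Y ω + θ ^ 2 * B ω) ∂P = 1 + θ * m + θ ^ 2 * M := by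
    have e1 : ∫ ω, (1 + θ * Y ω + θ ^ 2 * B ω) ∂P
        = (∫ ω, (1 + θ * Y ω) ∂P) + ∫ ω, θ ^ 2 * B ω ∂P :=
      integral_add ((integrable_const 1).add (hYint.const_mul θ)) (hB.const_mul (θ ^ 2))
    have e2 : ∫ ω, (1 + θ * Y ω) ∂P = (∫ ω, (1 : ℝ) ∂P) + ∫ ω, θ * Y ω ∂P :=
      integral_add (integrable_const 1) (hYint.const_mul θ)
    rw [e1, e2, integral_const_mul, integral_const_mul, integral_const]
    simp [hm, hM]
  rw [hcalc] at hInt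
  have hfin : 1 + θ * m + θ ^ 2 * M < 1 := by
    have h5 : θ ≤ -m / (2 * (M + 1)) := min_le_right _ _
    have hpos2 : (0:ℝ) < 2 * (M + 1) := by linarith
    have h6 : θ * (2 * (M + 1)) ≤ -m := (le_div_iff₀ hpos2).1 h5
    have h7 : θ * M ≤ -m / 2 := by nlinarith
    have h8 : m + θ * M < 0 := by linarith
    have h9 : θ * (m + θ * M) < 0 := mul_neg_of_pos_of_neg hθpos h8
    nlinarith [h9]
  linarith

lemma lintegral_indep_prod {Ω : Type*} [MeasurableSpace Ω] (P : Measure Ω)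
    [IsProbabilityMeasure P] (G : ℕ → Ω → ENNReal) (hG : ∀ i, Measurable (G i))
    (hind : iIndepFun G P) (s : Finset ℕ) :
    ∫⁻ ω, ∏ i ∈ s, G i ω ∂P = ∏ i ∈ s, ∫⁻ ω, G i ω ∂P := by
  classical
  induction s using Finset.induction_on with
  | empty => simp
  | @insert i s hi ih =>
      have hindep : IndepFun (∏ j ∈ s, G j) (G i) P :=
        hind.indepFun_finsetProd_of_notMem hG hi
      have hprodmeas : Measurable (∏ j ∈ s, G j) := by
        rw [show (∏ j ∈ s, G j) = fun ω => ∏ j ∈ s, G j ω from funext fun ω =>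
          Finset.prod_apply ..]
        exact Finset.measurable_prod s fun j _ => hG j
      have := lintegral_mul_eq_lintegral_mul_lintegral_of_indepFun hprodmeas (hG i) hindep
      simp_rw [Finset.prod_insert hi]
      rw [← ih]
      have heq : ∀ ω, G i ω * ∏ j ∈ s, G j ω = ((∏ j ∈ s, G j) * G i) ω := by
        intro ω; simp [mul_comm, Finset.prod_apply]
      calc ∫⁻ ω, G i ω * ∏ j ∈ s, G j ω ∂P = ∫⁻ ω, ((∏ j ∈ s, G j) * G i) ω ∂P := by
            simp_rw [heq]
        _ = (∫⁻ ω, (∏ j ∈ s, G j) ω ∂P) * ∫⁻ ω, G i ω ∂P := this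
        _ = (∫⁻ ω, ∏ j ∈ s, G j ω ∂P) * ∫⁻ ω, G i ω ∂P := by simp [Finset.prod_apply]
        _ = (∫⁻ ω, G i ω ∂P) * ∫⁻ ω, ∏ j ∈ s, G j ω ∂P := by rw [mul_comm]

lemma chernoff_bound {Ω : Type*} [MeasurableSpace Ω] (P : Measure Ω)
    [IsProbabilityMeasure P] (Y : ℕ → Ω → ℝ) (θ : ℝ) (ρ : ENNReal) (hθ : 0 < θ)
    (hmeas : ∀ i, Measurable (Y i))
    (hind : iIndepFun
      (fun i ω => ENNReal.ofReal (exp (θ * Y i ω))) P)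
    (s : Finset ℕ)
    (hval : ∀ i ∈ s, ∫⁻ ω, ENNReal.ofReal (exp (θ * Y i ω)) ∂P ≤ ρ) :
    P {ω | 0 < ∑ i ∈ s, Y i ω} ≤ ρ ^ s.card := by
  classical
  set G : ℕ → Ω → ENNReal := fun i ω => ENNReal.ofReal (exp (θ * Y i ω)) with hGdef
  have hGmeas : ∀ i, Measurable (G i) := fun i =>
    ((hmeas i).const_mul θ).exp.ennreal_ofReal
  have hsub : {ω | 0 < ∑ i ∈ s, Y i ω} ⊆ {ω | 1 ≤ ∏ i ∈ s, G i ω} := by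
    intro ω hω
    have h1 : (0:ℝ) < θ * ∑ i ∈ s, Y i ω := mul_pos hθ hω
    have h2 : (1:ℝ) ≤ exp (θ * ∑ i ∈ s, Y i ω) := by
      rw [Real.one_le_exp_iff]; linarith
    have h3 : exp (θ * ∑ i ∈ s, Y i ω) = ∏ i ∈ s, exp (θ * Y i ω) := by
      rw [Finset.mul_sum, Real.exp_sum]
    have h4 : ENNReal.ofReal (∏ i ∈ s, exp (θ * Y i ω)) = ∏ i ∈ s, G i ω := by
      rw [ENNReal.ofReal_prod_of_nonneg fun i _ => (Real.exp_pos _).le]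
    calc (1:ENNReal) = ENNReal.ofReal 1 := by simp
      _ ≤ ENNReal.ofReal (∏ i ∈ s, exp (θ * Y i ω)) := by
          rw [← h3]; exact ENNReal.ofReal_le_ofReal h2
      _ = ∏ i ∈ s, G i ω := h4
  calc P {ω | 0 < ∑ i ∈ s, Y i ω} ≤ P {ω | 1 ≤ ∏ i ∈ s, G i ω} := measure_mono hsub
    _ ≤ ∫⁻ ω, ∏ i ∈ s, G i ω ∂P := by
        have := mul_meas_ge_le_lintegral₀
          (μ := P) (Finset.aemeasurable_prod s fun i _ => (hGmeas i).aemeasurable) 1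
        simpa using this
    _ = ∏ i ∈ s, ∫⁻ ω, G i ω ∂P := lintegral_indep_prod P G hGmeas hind s
    _ ≤ ∏ i ∈ s, ρ := Finset.prod_le_prod' hval
    _ = ρ ^ s.card := Finset.prod_const ρ

end helpers

/-- Integrability of the IPA estimator V* = -∑_{n=1}^{-τ} J(n)/μ², where τ is the last
time (before 0) that the stationary backward waiting time hits zero, under stability and
an exponential moment condition. Index n here stands for -n ≤ 0, so -τ is `tau ω`. -/
theorem ipa_estimator_integrable
    {Ω : Type*} [MeasurableSpace Ω] (P : Measure Ω) [IsProbabilityMeasure P]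
    (J I : ℕ → Ω → ℝ) (μ : ℝ) (hμ : 0 < μ)
    (hmeas : ∀ n, Measurable (fun ω => (J n ω, I n ω)))
    (hindep : iIndepFun (fun n ω => (J n ω, I n ω)) P)
    (hident : ∀ n, 1 ≤ n →
      IdentDistrib (fun ω => (J n ω, I n ω)) (fun ω => (J 1 ω, I 1 ω)) P P)
    (hJpos : ∀ n ω, 0 ≤ J n ω) (hIpos : ∀ n, ∀ᵐ ω ∂P, 0 < I n ω)
    (hJint : Integrable (J 1) P) (hIint : Integrable (I 1) P)
    (hmean : (∫ ω, J 1 ω ∂P) / μ < ∫ ω, I 1 ω ∂P)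
    (hexp : ∃ θ : ℝ, 0 < θ ∧ Integrable (fun ω => exp (θ * J 1 ω)) P)
    (W : ℕ → Ω → ℝ)
    (hW : ∀ n ω, W n ω =
      ⨆ m : {m : ℕ // n ≤ m}, ∑ i ∈ Finset.Icc (n + 1) (m : ℕ), (J i ω / μ - I i ω))
    (tau : Ω → ℕ)
    (htau : ∀ᵐ ω ∂P, W (tau ω) ω = 0 ∧ ∀ m, m < tau ω → W m ω ≠ 0)
    (V : Ω → ℝ)
    (hV : ∀ ω, V ω = -∑ n ∈ Finset.Icc 1 (tau ω), J n ω / μ ^ 2) :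
    Integrable V P := by
  classical
  obtain ⟨θ₀, hθ₀, hexpint⟩ := hexp
  set X : ℕ → Ω → ℝ := fun i ω => J i ω / μ - I i ω with hXdef
  set S : ℕ → Ω → ℝ := fun m ω => ∑ i ∈ Finset.Icc 1 m, X i ω with hSdef
  have hJmeas : ∀ i, Measurable (J i) := fun i => (measurable_fst.comp (hmeas i) : _)
  have hImeas : ∀ i, Measurable (I i) := fun i => (measurable_snd.comp (hmeas i) : _)
  have hXmeas : ∀ i, Measurable (X i) := fun i => ((hJmeas i).div_const μ).sub (hImeas i)
  have hSmeas : ∀ m, Measurable (S m) := fun m =>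
    Finset.measurable_sum _ fun i _ => hXmeas i
  -- basic facts about W
  have hWbase : ∀ n ω, ∑ i ∈ Finset.Icc (n + 1) (n : ℕ), X i ω = 0 := by
    intro n ω
    rw [Finset.Icc_eq_empty (by omega)]
    simp
  have hWnn : ∀ n ω, 0 ≤ W n ω := by
    intro n ω
    rw [hW n ω]
    by_cases hbdd : BddAbove (Set.range fun m : {m : ℕ // n ≤ m} =>
      ∑ i ∈ Finset.Icc (n + 1) (m : ℕ), X i ω)
    · have := le_ciSup hbdd (⟨n, le_rfl⟩ : {m : ℕ // n ≤ m})
      calc (0:ℝ) = ∑ i ∈ Finset.Icc (n + 1) n, X i ω := (hWbase n ω).symm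
        _ ≤ _ := this
    · rw [Real.iSup_of_not_bddAbove hbdd]
  have hWpos : ∀ n ω, W n ω ≠ 0 →
      ∃ m, n ≤ m ∧ 0 < ∑ i ∈ Finset.Icc (n + 1) m, X i ω := by
    intro n ω hne
    by_cases hbdd : BddAbove (Set.range fun m : {m : ℕ // n ≤ m} =>
      ∑ i ∈ Finset.Icc (n + 1) (m : ℕ), X i ω)
    · have hpos : 0 < W n ω := lt_of_le_of_ne (hWnn n ω) (Ne.symm hne)
      by_contra hc
      push_neg at hc
      have : W n ω ≤ 0 := by
        rw [hW n ω]
        exact ciSup_le fun m => hc (m : ℕ) m.2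
      linarith
    · obtain ⟨y, ⟨⟨m, hm⟩, rfl⟩, h0⟩ := not_bddAbove_iff.1 hbdd 0
      exact ⟨m, hm, h0⟩
  have hWmeas : ∀ n, Measurable (W n) := by
    intro n
    have : W n = fun ω => ⨆ m : {m : ℕ // n ≤ m},
        ∑ i ∈ Finset.Icc (n + 1) (m : ℕ), X i ω := funext fun ω => hW n ω
    rw [this]
    exact Measurable.iSup fun m => Finset.measurable_sum _ fun i _ => hXmeas i
  -- S decomposition
  have hSsplit : ∀ (ω : Ω) (k m : ℕ), k ≤ m →
      S m ω = S k ω + ∑ i ∈ Finset.Icc (k + 1) m, X i ω := by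
    intro ω k m hkm
    have h1 := Finset.sum_Ioc_consecutive (fun i => X i ω) (Nat.zero_le k) hkm
    simp only [hSdef, ← Finset.Icc_add_one_left_eq_Ioc] at h1 ⊢
    exact h1.symm
  -- chain lemma
  have hchain : ∀ᵐ ω ∂P, ∀ n, 1 ≤ n → n ≤ tau ω → ∃ m, n ≤ m ∧ 0 < S m ω := by
    filter_upwards [htau] with ω hω n hn1 hntau
    obtain ⟨h0, hne⟩ := hω
    have aux : ∀ d k, tau ω - k ≤ d → k < tau ω → 0 ≤ S k ω →
        ∃ m, tau ω ≤ m ∧ 0 < S m ω := by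
      intro d
      induction d with
      | zero => intro k hd hk _; omega
      | succ d ih =>
          intro k hd hk hSk
          obtain ⟨m', hm', hpos⟩ := hWpos k ω (hne k hk)
          have hS' : 0 < S m' ω := by
            rw [hSsplit ω k m' hm']; linarith
          rcases le_or_gt (tau ω) m' with h | h
          · exact ⟨m', h, hS'⟩
          · have hkm' : k < m' := by
              by_contra hc2
              push_neg at hc2
              rw [Finset.Icc_eq_empty (by omega)] at hpos
              simp at hpos
            exact ih m' (by omega) h hS'.le
    have hS0 : S 0 ω = 0 := by
      simp [hSdef]
    obtain ⟨m, hm1, hm2⟩ := aux (tau ω) 0 (by omega) (by omega) (by rw [hS0])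
    exact ⟨m, le_trans hntau hm1, hm2⟩
  -- measurable version of tau
  set p : Ω → ℕ → Prop := fun ω n => W n ω = 0 ∨ ∀ m, W m ω ≠ 0 with hpdef
  have hpex : ∀ ω, ∃ n, p ω n := by
    intro ω
    by_cases h : ∃ m, W m ω = 0
    · obtain ⟨m, hm⟩ := h; exact ⟨m, Or.inl hm⟩
    · push_neg at h; exact ⟨0, Or.inr h⟩
  have hpmeas : ∀ k, MeasurableSet {ω | p ω k} := by
    intro k
    have : {ω | p ω k} = (W k ⁻¹' {0}) ∪ ⋂ m, (W m ⁻¹' {0})ᶜ := by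
      ext ω
      show (W k ω = 0 ∨ ∀ m, W m ω ≠ 0) ↔ _
      simp [Set.mem_iInter, Set.mem_union]
    rw [this]
    exact MeasurableSet.union ((hWmeas k) (measurableSet_singleton 0))
      (MeasurableSet.iInter fun m => ((hWmeas m) (measurableSet_singleton 0)).compl)
  set T : Ω → ℕ := fun ω => Nat.find (hpex ω) with hTdef
  have hTmeas : Measurable T := measurable_find hpex hpmeas
  have htauT : ∀ᵐ ω ∂P, tau ω = T ω := by
    filter_upwards [htau] with ω ⟨h0, hlt⟩
    refine (Nat.find_eq_iff (hpex ω)).2 ⟨Or.inl h0, ?_⟩ |>.symm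
    intro k hk
    rintro (h | h)
    · exact hlt k hk h
    · exact h (tau ω) h0
  -- truncation level c
  have hminint : ∀ c : ℝ, Integrable (fun ω => min (I 1 ω) c) P := fun c =>
    hIint.inf (integrable_const c)
  have hconv : Filter.Tendsto (fun n : ℕ => ∫ ω, min (I 1 ω) (n : ℝ) ∂P) Filter.atTop
      (nhds (∫ ω, I 1 ω ∂P)) := by
    apply integral_tendsto_of_tendsto_of_monotone (fun n => hminint n) hIint
    · exact Filter.Eventually.of_forall fun ω a b hab =>
        min_le_min le_rfl (Nat.cast_le.2 hab)
    · refine Filter.Eventually.of_forall fun ω => ?_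
      refine Filter.Tendsto.congr' ?_ tendsto_const_nhds
      filter_upwards [Filter.eventually_ge_atTop (Nat.ceil (I 1 ω))] with n hn
      exact (min_eq_left (le_trans (Nat.le_ceil _) (Nat.cast_le.2 hn))).symm
  obtain ⟨N, hN⟩ := (hconv.eventually (eventually_gt_nhds hmean)).exists
  set c : ℝ := (N : ℝ) with hcdef
  have hc0 : (0:ℝ) ≤ c := Nat.cast_nonneg N
  set Y : ℕ → Ω → ℝ := fun i ω => J i ω / μ - min (I i ω) c with hYdef
  have hYmeas : ∀ i, Measurable (Y i) := fun i =>
    ((hJmeas i).div_const μ).sub ((hImeas i).min measurable_const)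
  have hXleY : ∀ i ω, X i ω ≤ Y i ω := fun i ω =>
    sub_le_sub_left (min_le_left _ _) _
  have hY1int : Integrable (Y 1) P := (hJint.div_const μ).sub (hminint c)
  have hY1neg : ∫ ω, Y 1 ω ∂P < 0 := by
    have e : ∫ ω, Y 1 ω ∂P = (∫ ω, J 1 ω / μ ∂P) - ∫ ω, min (I 1 ω) c ∂P :=
      integral_sub (hJint.div_const μ) (hminint c)
    rw [e, integral_div]
    linarith [hN]
  set θf : ℝ := θ₀ * μ / 2 with hθfdef
  have hθfpos : 0 < θf := by positivity
  set B : Ω → ℝ := fun ω => 4 / θf ^ 2 * exp (θ₀ * μ * c) * exp (θ₀ * J 1 ω) with hBdef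
  have hBint : Integrable B P := hexpint.const_mul _
  have hYabs : ∀ᵐ ω ∂P, |Y 1 ω| ≤ J 1 ω / μ + c := by
    filter_upwards [hIpos 1] with ω hI
    have h1 : 0 ≤ min (I 1 ω) c := le_min hI.le hc0
    have h2 : min (I 1 ω) c ≤ c := min_le_right _ _
    have h3 : 0 ≤ J 1 ω / μ := div_nonneg (hJpos 1 ω) hμ.le
    rw [abs_le]
    constructor
    · simp only [hYdef]; linarith
    · simp only [hYdef]; linarith
  have hbound : ∀ᵐ ω ∂P, Y 1 ω ^ 2 * exp (θf * |Y 1 ω|) ≤ B ω := by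
    filter_upwards [hYabs] with ω habs
    have h3 : 0 ≤ J 1 ω / μ := div_nonneg (hJpos 1 ω) hμ.le
    set u : ℝ := J 1 ω / μ + c with hudef
    have hu0 : 0 ≤ u := by rw [hudef]; linarith
    have h1 : Y 1 ω ^ 2 ≤ u ^ 2 := by
      rw [← sq_abs]
      exact pow_le_pow_left₀ (abs_nonneg _) habs 2
    have h2 : exp (θf * |Y 1 ω|) ≤ exp (θf * u) :=
      Real.exp_le_exp.2 (mul_le_mul_of_nonneg_left habs hθfpos.le)
    have hsq : u ^ 2 ≤ 4 / θf ^ 2 * exp (θf * u) := by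
      have h4 := sq_le_four_mul_exp (θf * u) (by positivity)
      have hθf2 : (0:ℝ) < θf ^ 2 := by positivity
      rw [mul_pow] at h4
      rw [div_mul_eq_mul_div, le_div_iff₀ hθf2]
      nlinarith
    have h5 : exp (θf * u) * exp (θf * u) = exp (θ₀ * μ * c) * exp (θ₀ * J 1 ω) := by
      rw [← Real.exp_add, ← Real.exp_add]
      congr 1
      rw [hθfdef, hudef]
      field_simp
      ring
    have e1 : Y 1 ω ^ 2 * exp (θf * |Y 1 ω|) ≤ u ^ 2 * exp (θf * u) :=
      le_trans (mul_le_mul_of_nonneg_left h2 (sq_nonneg _))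
        (mul_le_mul_of_nonneg_right h1 (exp_pos _).le)
    calc Y 1 ω ^ 2 * exp (θf * |Y 1 ω|) ≤ u ^ 2 * exp (θf * u) := e1
      _ ≤ 4 / θf ^ 2 * exp (θf * u) * exp (θf * u) :=
          mul_le_mul_of_nonneg_right hsq (exp_pos _).le
      _ = 4 / θf ^ 2 * (exp (θf * u) * exp (θf * u)) := by ring
      _ = B ω := by rw [h5, hBdef]; ring
  have hintθ : ∀ θ : ℝ, 0 < θ → θ ≤ θf → Integrable (fun ω => exp (θ * Y 1 ω)) P := by
    intro θ hθ hθle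
    refine hexpint.mono (((hYmeas 1).const_mul θ).exp.aestronglyMeasurable) ?_
    filter_upwards [hIpos 1] with ω hI
    rw [Real.norm_eq_abs, Real.norm_eq_abs, abs_of_pos (exp_pos _), abs_of_pos (exp_pos _)]
    apply Real.exp_le_exp.2
    have hmin0 : 0 ≤ min (I 1 ω) c := le_min hI.le hc0
    have hYle : Y 1 ω ≤ J 1 ω / μ := by
      simp only [hYdef]; linarith
    have h3 : 0 ≤ J 1 ω / μ := div_nonneg (hJpos 1 ω) hμ.le
    have hstep : θ * Y 1 ω ≤ θf * (J 1 ω / μ) :=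
      le_trans (mul_le_mul_of_nonneg_left hYle hθ.le)
        (mul_le_mul_of_nonneg_right hθle h3)
    have heq : θf * (J 1 ω / μ) = θ₀ / 2 * J 1 ω := by
      rw [hθfdef]; field_simp
    have hlast : θ₀ / 2 * J 1 ω ≤ θ₀ * J 1 ω := by nlinarith [hJpos 1 ω]
    exact le_trans (le_trans hstep (le_of_eq heq)) hlast
  obtain ⟨θ, hθpos, hθleθf, hρlt⟩ :=
    exists_theta_mgf_lt_one P (Y 1) hY1int hY1neg B hBint θf hθfpos hbound hintθ
  set ρR : ℝ := ∫ ω, exp (θ * Y 1 ω) ∂P with hρRdef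
  set r : ENNReal := ENNReal.ofReal ρR with hrdef
  have hr1 : r < 1 := by
    rw [hrdef]
    exact ENNReal.ofReal_lt_one.2 hρlt
  -- independent exponential ENNReal variables
  set φ : ℝ × ℝ → ENNReal :=
    fun q => ENNReal.ofReal (exp (θ * (q.1 / μ - min q.2 c))) with hφdef
  have hφmeas : Measurable φ := by
    apply Measurable.ennreal_ofReal
    exact (((measurable_fst.div_const μ).sub
      (measurable_snd.min measurable_const)).const_mul θ).exp
  set G : ℕ → Ω → ENNReal := fun i ω => ENNReal.ofReal (exp (θ * Y i ω)) with hGdef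
  have hGmeas : ∀ i, Measurable (G i) := fun i =>
    ((hYmeas i).const_mul θ).exp.ennreal_ofReal
  have hGind : iIndepFun G P :=
    hindep.comp (fun _ => φ) (fun _ => hφmeas)
  have hGval : ∀ i, 1 ≤ i → ∫⁻ ω, G i ω ∂P = r := by
    intro i hi
    have hid : IdentDistrib (G i) (G 1) P P := (hident i hi).comp hφmeas
    rw [show (∫⁻ ω, G i ω ∂P) = ∫⁻ ω, G 1 ω ∂P from hid.lintegral_eq]
    rw [hrdef, hρRdef]
    exact (MeasureTheory.ofReal_integral_eq_lintegral_ofReal (hintθ θ hθpos hθleθf)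
      (Filter.Eventually.of_forall fun ω => (exp_pos _).le)).symm
  -- Chernoff bound for each partial sum
  have hSm : ∀ m : ℕ, 1 ≤ m → P {ω | 0 < S m ω} ≤ r ^ m := by
    intro m hm
    have hsub : {ω | 0 < S m ω} ⊆ {ω | 0 < ∑ i ∈ Finset.Icc 1 m, Y i ω} := by
      intro ω hω
      have hle : S m ω ≤ ∑ i ∈ Finset.Icc 1 m, Y i ω :=
        Finset.sum_le_sum fun i _ => hXleY i ω
      exact lt_of_lt_of_le hω hle
    have hch := chernoff_bound P Y θ r hθpos hYmeas hGind (Finset.Icc 1 m)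
      (fun i hi => le_of_eq (hGval i (Finset.mem_Icc.1 hi).1))
    rw [Nat.card_Icc] at hch
    have hmm : m + 1 - 1 = m := by omega
    rw [hmm] at hch
    exact le_trans (measure_mono hsub) hch
  -- geometric tail bound for T
  have hTail : ∀ n : ℕ, 1 ≤ n → P {ω | n ≤ T ω} ≤ r ^ n * (1 - r)⁻¹ := by
    intro n hn
    have hincl : {ω | n ≤ T ω} ≤ᵐ[P] ⋃ k : ℕ, {ω | 0 < S (n + k) ω} := by
      filter_upwards [hchain, htauT] with ω hch hTeq
      intro hmem
      have htaun : n ≤ tau ω := by rw [hTeq]; exact hmem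
      obtain ⟨m, hm1, hm2⟩ := hch n hn htaun
      refine Set.mem_iUnion.2 ⟨m - n, ?_⟩
      have hnm : n + (m - n) = m := by omega
      simpa [hnm] using hm2
    calc P {ω | n ≤ T ω} ≤ P (⋃ k : ℕ, {ω | 0 < S (n + k) ω}) := measure_mono_ae hincl
      _ ≤ ∑' k : ℕ, P {ω | 0 < S (n + k) ω} := measure_iUnion_le _
      _ ≤ ∑' k : ℕ, r ^ (n + k) := ENNReal.tsum_le_tsum fun k => hSm (n + k) (by omega)
      _ = r ^ n * (1 - r)⁻¹ := by
          simp_rw [pow_add]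
          rw [ENNReal.tsum_mul_left, ENNReal.tsum_geometric]
  -- second moments
  set h2 : ℕ → Ω → ENNReal := fun i ω => ENNReal.ofReal (J i ω / μ ^ 2) with hh2def
  have hh2meas : ∀ i, Measurable (h2 i) := fun i =>
    ((hJmeas i).div_const _).ennreal_ofReal
  have hrpow2 : ∀ x : ℝ, 0 ≤ x → (ENNReal.ofReal x) ^ (2:ℝ) = ENNReal.ofReal (x ^ 2) := by
    intro x hx
    rw [ENNReal.ofReal_rpow_of_nonneg hx (by norm_num : (0:ℝ) ≤ 2)]
    congr 1
    rw [show (2:ℝ) = ((2:ℕ):ℝ) by norm_num, Real.rpow_natCast]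
  have hJsq_int : Integrable (fun ω => (J 1 ω / μ ^ 2) ^ 2) P := by
    refine (hexpint.const_mul (4 / θ₀ ^ 2 / μ ^ 4)).mono
      ((((hJmeas 1).div_const _).pow_const 2).aestronglyMeasurable) ?_
    filter_upwards with ω
    have hJ := hJpos 1 ω
    have hsq := sq_le_four_mul_exp (θ₀ * J 1 ω) (by positivity)
    rw [mul_pow] at hsq
    have hθ2 : (0:ℝ) < θ₀ ^ 2 := by positivity
    have hJ2 : J 1 ω ^ 2 ≤ 4 / θ₀ ^ 2 * exp (θ₀ * J 1 ω) := by
      rw [div_mul_eq_mul_div, le_div_iff₀ hθ2]; nlinarith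
    rw [Real.norm_eq_abs, Real.norm_eq_abs,
      abs_of_nonneg (by positivity : (0:ℝ) ≤ (J 1 ω / μ ^ 2) ^ 2),
      abs_of_nonneg (by positivity : (0:ℝ) ≤ 4 / θ₀ ^ 2 / μ ^ 4 * exp (θ₀ * J 1 ω))]
    have hexpand : (J 1 ω / μ ^ 2) ^ 2 = J 1 ω ^ 2 / μ ^ 4 := by
      rw [div_pow]; ring_nf
    rw [hexpand, div_le_iff₀ (by positivity : (0:ℝ) < μ ^ 4)]
    calc J 1 ω ^ 2 ≤ 4 / θ₀ ^ 2 * exp (θ₀ * J 1 ω) := hJ2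
      _ = 4 / θ₀ ^ 2 / μ ^ 4 * exp (θ₀ * J 1 ω) * μ ^ 4 := by
          rw [show 4 / θ₀ ^ 2 / μ ^ 4 * exp (θ₀ * J 1 ω) * μ ^ 4
            = 4 / θ₀ ^ 2 * exp (θ₀ * J 1 ω) * (μ ^ 4 / μ ^ 4) by ring,
            div_self (by positivity : (μ:ℝ) ^ 4 ≠ 0), mul_one]
  have hsqptw : ∀ i ω, h2 i ω ^ (2:ℝ) = ENNReal.ofReal ((J i ω / μ ^ 2) ^ 2) := by
    intro i ω
    rw [hh2def]
    exact hrpow2 _ (div_nonneg (hJpos i ω) (by positivity))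
  set B2 : ENNReal := ∫⁻ ω, h2 1 ω ^ (2:ℝ) ∂P with hB2def
  have hB2eq : ∀ i, 1 ≤ i → ∫⁻ ω, h2 i ω ^ (2:ℝ) ∂P = B2 := by
    intro i hi
    rw [hB2def]
    have hu : Measurable (fun y : ℝ × ℝ => ENNReal.ofReal ((y.1 / μ ^ 2) ^ 2)) :=
      ((measurable_fst.div_const _).pow_const 2).ennreal_ofReal
    have hid := (hident i hi).comp hu
    calc ∫⁻ ω, h2 i ω ^ (2:ℝ) ∂P = ∫⁻ ω, ENNReal.ofReal ((J i ω / μ ^ 2) ^ 2) ∂P :=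
          lintegral_congr fun ω => hsqptw i ω
      _ = ∫⁻ ω, ENNReal.ofReal ((J 1 ω / μ ^ 2) ^ 2) ∂P := hid.lintegral_eq
      _ = ∫⁻ ω, h2 1 ω ^ (2:ℝ) ∂P := (lintegral_congr fun ω => hsqptw 1 ω).symm
  have hB2top : B2 ≠ ⊤ := by
    rw [hB2def]
    rw [lintegral_congr fun ω => hsqptw 1 ω]
    rw [← MeasureTheory.ofReal_integral_eq_lintegral_ofReal hJsq_int
      (Filter.Eventually.of_forall fun ω => by positivity)]
    exact ENNReal.ofReal_ne_top
  -- the measurable candidate for V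
  set V' : Ω → ℝ := fun ω => -∑ n ∈ Finset.Icc 1 (T ω), J n ω / μ ^ 2 with hV'def
  have hV'meas : Measurable V' := by
    rw [hV'def]
    simp only [hTdef]
    exact Measurable.find (f := fun k ω => -∑ n ∈ Finset.Icc 1 k, J n ω / μ ^ 2)
      (fun k => (Finset.measurable_sum _ fun n _ => (hJmeas n).div_const _).neg)
      (fun n => hpmeas n) hpex
  have hVae : V' =ᵐ[P] V := by
    filter_upwards [htauT] with ω hTeq
    rw [hV'def, hV ω, hTeq]
  refine Integrable.congr ⟨hV'meas.aestronglyMeasurable, ?_⟩ hVae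
  rw [hasFiniteIntegral_iff_norm]
  have hnorm : ∀ ω, ENNReal.ofReal ‖V' ω‖ = ∑ i ∈ Finset.range (T ω), h2 (1 + i) ω := by
    intro ω
    have h0 : ‖V' ω‖ = ∑ n ∈ Finset.Icc 1 (T ω), J n ω / μ ^ 2 := by
      rw [hV'def]
      rw [norm_neg, Real.norm_eq_abs, abs_of_nonneg]
      exact Finset.sum_nonneg fun n _ => div_nonneg (hJpos n ω) (by positivity)
    rw [h0, ← Finset.Ico_add_one_right_eq_Icc, Finset.sum_Ico_eq_sum_range]
    have hTT : T ω + 1 - 1 = T ω := by omega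
    rw [hTT, ENNReal.ofReal_sum_of_nonneg fun i _ =>
      div_nonneg (hJpos (1 + i) ω) (by positivity)]
  have hset : ∀ i : ℕ, MeasurableSet {ω | 1 + i ≤ T ω} := by
    intro i
    have : {ω | 1 + i ≤ T ω} = T ⁻¹' Set.Ici (1 + i) := rfl
    rw [this]
    exact hTmeas measurableSet_Ici
  have key : ∀ i : ℕ, ∫⁻ ω, Set.indicator {ω' | 1 + i ≤ T ω'} (h2 (1 + i)) ω ∂P ≤
      B2 ^ (1/2 : ℝ) * ((1 - r)⁻¹ ^ (1/2 : ℝ) * (r ^ (1/2 : ℝ)) ^ (1 + i)) := by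
    intro i
    have hconj : Real.HolderConjugate 2 2 := Real.HolderConjugate.two_two
    have hprod : ∀ ω, Set.indicator {ω' | 1 + i ≤ T ω'} (h2 (1 + i)) ω
        = (h2 (1 + i) * Set.indicator {ω' | 1 + i ≤ T ω'} (fun _ => (1:ENNReal))) ω := by
      intro ω
      by_cases h : ω ∈ {ω' | 1 + i ≤ T ω'} <;>
        simp [Set.indicator_of_mem, Set.indicator_of_notMem, h]
    have hCS := ENNReal.lintegral_mul_le_Lp_mul_Lq P hconj (hh2meas (1 + i)).aemeasurable
      ((measurable_one.indicator (hset i)).aemeasurable)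
    have hind2 : ∀ ω : Ω, (Set.indicator {ω' | 1 + i ≤ T ω'} (fun _ => (1:ENNReal)) ω) ^ (2:ℝ)
        = Set.indicator {ω' | 1 + i ≤ T ω'} (fun _ => (1:ENNReal)) ω := by
      intro ω
      by_cases h : ω ∈ {ω' | 1 + i ≤ T ω'} <;>
        simp [Set.indicator_of_mem, Set.indicator_of_notMem, h,
          ENNReal.rpow_natCast, ENNReal.zero_rpow_of_pos]
    have hindval : ∫⁻ ω, (Set.indicator {ω' | 1 + i ≤ T ω'} (fun _ => (1:ENNReal)) ω) ^ (2:ℝ) ∂P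
        = P {ω | 1 + i ≤ T ω} := by
      rw [lintegral_congr hind2]
      exact lintegral_indicator_one (hset i)
    calc ∫⁻ ω, Set.indicator {ω' | 1 + i ≤ T ω'} (h2 (1 + i)) ω ∂P
        = ∫⁻ ω, (h2 (1 + i) * Set.indicator {ω' | 1 + i ≤ T ω'} (fun _ => (1:ENNReal))) ω ∂P :=
          lintegral_congr hprod
      _ ≤ (∫⁻ ω, h2 (1 + i) ω ^ (2:ℝ) ∂P) ^ (1/2 : ℝ) *
          (∫⁻ ω, (Set.indicator {ω' | 1 + i ≤ T ω'} (fun _ => (1:ENNReal)) ω) ^ (2:ℝ) ∂P)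
            ^ (1/2 : ℝ) := hCS
      _ = B2 ^ (1/2 : ℝ) * (P {ω | 1 + i ≤ T ω}) ^ (1/2 : ℝ) := by
          rw [hB2eq (1 + i) (by omega), hindval]
      _ ≤ B2 ^ (1/2 : ℝ) * (r ^ (1 + i) * (1 - r)⁻¹) ^ (1/2 : ℝ) := by
          apply mul_le_mul_right
          exact ENNReal.rpow_le_rpow (hTail (1 + i) (by omega)) (by norm_num)
      _ = B2 ^ (1/2 : ℝ) * ((1 - r)⁻¹ ^ (1/2 : ℝ) * (r ^ (1/2 : ℝ)) ^ (1 + i)) := by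
          rw [ENNReal.mul_rpow_of_nonneg _ _ (by norm_num : (0:ℝ) ≤ 1/2)]
          rw [← ENNReal.rpow_natCast r (1 + i), ← ENNReal.rpow_mul,
            mul_comm ((1 + i : ℕ) : ℝ) (1/2 : ℝ), ENNReal.rpow_mul, ENNReal.rpow_natCast]
          ring
  calc ∫⁻ ω, ENNReal.ofReal ‖V' ω‖ ∂P
      = ∫⁻ ω, ∑ i ∈ Finset.range (T ω), h2 (1 + i) ω ∂P := lintegral_congr hnorm
    _ ≤ ∫⁻ ω, ∑' i : ℕ, Set.indicator {ω' | 1 + i ≤ T ω'} (h2 (1 + i)) ω ∂P := by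
        apply lintegral_mono
        intro ω
        have hterm : ∀ i ∈ Finset.range (T ω), h2 (1 + i) ω
            = Set.indicator {ω' | 1 + i ≤ T ω'} (h2 (1 + i)) ω := by
          intro i hi
          rw [Set.indicator_of_mem]
          exact Set.mem_setOf.2 (by have := Finset.mem_range.1 hi; omega)
        exact le_trans (le_of_eq (Finset.sum_congr rfl hterm)) (ENNReal.sum_le_tsum _)
    _ = ∑' i : ℕ, ∫⁻ ω, Set.indicator {ω' | 1 + i ≤ T ω'} (h2 (1 + i)) ω ∂P :=
        lintegral_tsum fun i => ((hh2meas (1 + i)).indicator (hset i)).aemeasurable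
    _ ≤ ∑' i : ℕ, B2 ^ (1/2 : ℝ) * ((1 - r)⁻¹ ^ (1/2 : ℝ) * (r ^ (1/2 : ℝ)) ^ (1 + i)) :=
        ENNReal.tsum_le_tsum key
    _ < ⊤ := by
        rw [ENNReal.tsum_mul_left, ENNReal.tsum_mul_left]
        have hq1 : r ^ (1/2 : ℝ) < 1 := ENNReal.rpow_lt_one hr1 (by norm_num)
        have hgeom : ∑' i : ℕ, (r ^ (1/2 : ℝ)) ^ (1 + i) ≤ (1 - r ^ (1/2 : ℝ))⁻¹ := by
          calc ∑' i : ℕ, (r ^ (1/2 : ℝ)) ^ (1 + i)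
              ≤ ∑' i : ℕ, (r ^ (1/2 : ℝ)) ^ i :=
                ENNReal.tsum_le_tsum fun i => pow_le_pow_of_le_one (by simp)
                  hq1.le (by omega)
            _ = (1 - r ^ (1/2 : ℝ))⁻¹ := ENNReal.tsum_geometric _
        have h1r : (1:ENNReal) - r ≠ 0 := by
          intro h
          exact absurd (tsub_eq_zero_iff_le.1 h) (not_le.2 hr1)
        have h1q : (1:ENNReal) - r ^ (1/2 : ℝ) ≠ 0 := by
          intro h
          exact absurd (tsub_eq_zero_iff_le.1 h) (not_le.2 hq1)
        have hfin1 : B2 ^ (1/2 : ℝ) < ⊤ := ENNReal.rpow_lt_top_of_nonneg (by norm_num) hB2top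
        have hfin2 : (1 - r)⁻¹ ^ (1/2 : ℝ) < ⊤ :=
          ENNReal.rpow_lt_top_of_nonneg (by norm_num) (ENNReal.inv_ne_top.2 h1r)
        have hfin3 : ∑' i : ℕ, (r ^ (1/2 : ℝ)) ^ (1 + i) < ⊤ :=
          lt_of_le_of_lt hgeom (ENNReal.inv_lt_top.2 (pos_iff_ne_zero.mpr h1q))
        exact ENNReal.mul_lt_top hfin1 (ENNReal.mul_lt_top hfin2 hfin3)
end

section
/- In the stationary backward sample path of the fork-join network, the number Q_k(0) of tasks at station k at time 0 equals the number of indices n ≥ 1 with A(-n) < 0 < A(-n) + W*_k(-n) + J_k(n), and this count is finite almost surely under stability; moreover Q_k(0) equals the finite sum ∑_{n=1}^{N} 1{A(-n) + W*_k(-n) + J_k(n) > 0} for any N with A(-N) + W*_k(-N) + J_k(N) < 0. -/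
open Filter

/-- The number Q_k(0) of tasks at a station at time 0 equals the number of indices n ≥ 1 with
A(-n) < 0 < A(-n) + W*(-n) + J(n); this count is finite, and equals the finite sum
∑_{n=1}^N 1{A(-n) + W*(-n) + J(n) > 0} for any N with A(-N) + W*(-N) + J(N) < 0. -/
theorem tasks_in_station_count
    (I J Wb A : ℕ → ℝ)
    (hI : ∀ m, 1 ≤ m → 0 < I m)
    (hJ : ∀ n, 0 ≤ J n)
    (hWb : ∀ n, 0 ≤ Wb n)
    (hA : ∀ n, A n = -∑ m ∈ Finset.Icc 1 n, I m)
    (D : ℕ → ℝ) (hD : ∀ n, D n = A n + Wb n + J n)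
    (hdec : ∀ m n, 1 ≤ m → m < n → D n < D m)
    (htend : Tendsto D atTop atBot) :
    {n : ℕ | 1 ≤ n ∧ A n < 0 ∧ 0 < D n}.Finite ∧
    ∀ N, D N < 0 →
      {n : ℕ | 1 ≤ n ∧ A n < 0 ∧ 0 < D n}.ncard =
        ∑ n ∈ Finset.Icc 1 N, (if 0 < D n then 1 else 0) := by
  have hAneg : ∀ n, 1 ≤ n → A n < 0 := by
    intro n hn
    rw [hA]
    have hpos : 0 < ∑ m ∈ Finset.Icc 1 n, I m :=
      Finset.sum_pos (fun m hm => hI m (Finset.mem_Icc.mp hm).1)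
        ⟨1, Finset.mem_Icc.mpr ⟨le_refl 1, hn⟩⟩
    linarith
  have hD0 : 0 ≤ D 0 := by
    have := hJ 0; have := hWb 0
    have hA0 : A 0 = 0 := by simp [hA]
    rw [hD]; linarith
  have hset : ∀ N, D N < 0 →
      {n : ℕ | 1 ≤ n ∧ A n < 0 ∧ 0 < D n}
        = ↑((Finset.Icc 1 N).filter (fun n => 0 < D n)) := by
    intro N hN
    have hN1 : 1 ≤ N := by
      by_contra h
      interval_cases N
      · linarith
    ext n
    simp only [Set.mem_setOf_eq, Finset.coe_filter, Finset.mem_Icc]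
    constructor
    · rintro ⟨hn1, _, hDn⟩
      refine ⟨⟨hn1, ?_⟩, hDn⟩
      by_contra h
      push_neg at h
      have := hdec N n hN1 h
      linarith
    · rintro ⟨⟨hn1, _⟩, hDn⟩
      exact ⟨hn1, hAneg n hn1, hDn⟩
  obtain ⟨N0, hN0⟩ : ∃ N, D N < 0 := (htend.eventually (eventually_lt_atBot 0)).exists
  constructor
  · rw [hset N0 hN0]; exact (Finset.finite_toSet _)
  · intro N hN
    rw [hset N hN, Set.ncard_coe_finset, ← Finset.card_filter]
end
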